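/- For every f ∈ 𝔫_1 there exist k-linear maps f_r: V/F_r → F_r (1 ≤ r ≤ N−1) such that f = Σ_{r=1}^{N−1} ι_r ∘ f_r ∘ q_r, where q_r: V → V/F_r denotes the canonical projection and ι_r: F_r → V the inclusion. In other words, the summation map ⊕_{r=1}^{N−1} Hom_k(V/F_r, F_r) → 𝔫_1, (f_r)_r ↦ Σ_r ι_r ∘ f_r ∘ q_r, is surjective. (This is a supporting claim in the proof of Lemma 3.4.1 of the paper.) -/

import Mathlib

variable {k : Type*} [Field k] {V : Type*} [AddCommGroup V] [Module k V]

/-- `lowering F n` is the space `𝔫_n` of endomorphisms `f` with `f (F r) ⊆ F (r - n)`. -/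
def lowering (F : ℤ → Submodule k V) (n : ℤ) : Submodule k (Module.End k V) where
  carrier := {f | ∀ r : ℤ, ∀ x ∈ F r, f x ∈ F (r - n)}
  add_mem' := by
    intro f g hf hg r x hx
    simpa using (F (r - n)).add_mem (hf r x hx) (hg r x hx)
  zero_mem' := by
    intro r x hx
    simp
  smul_mem' := by
    intro c f hf r x hx
    simpa using (F (r - n)).smul_mem c (hf r x hx)

private lemma telescope_aux {M : Type*} [AddCommGroup M] (h : ℤ → M) (m : ℕ) :
    ∑ r ∈ Finset.Icc (1 : ℤ) (m : ℤ), (h r - h (r - 1)) = h m - h 0 := by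
  induction m with
  | zero => simp
  | succ n ih =>
    have hins : Finset.Icc (1 : ℤ) ((n : ℤ) + 1)
        = insert ((n : ℤ) + 1) (Finset.Icc (1 : ℤ) (n : ℤ)) := by
      ext x; simp only [Finset.mem_Icc, Finset.mem_insert]; omega
    have : ((n + 1 : ℕ) : ℤ) = (n : ℤ) + 1 := by push_cast; ring
    rw [this, hins, Finset.sum_insert (by simp), ih]
    simp only [add_sub_cancel_right]
    abel

/-- Every `f ∈ 𝔫_1` can be written as `f = ∑_{r=1}^{N−1} ι_r ∘ f_r ∘ q_r`
for some linear maps `f_r : V/F_r → F_r`, where `q_r : V → V/F_r` is the canonical projection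
and `ι_r : F_r → V` the inclusion; i.e. the summation map
`⊕_{r=1}^{N−1} Hom(V/F_r, F_r) → 𝔫_1` is surjective. -/
theorem stmt_14 (F : ℤ → Submodule k V) (hmono : Monotone F) (N : ℕ) (hN : 1 ≤ N)
    (hF0 : ∀ j : ℤ, j ≤ 0 → F j = ⊥) (hFN : ∀ j : ℤ, (N : ℤ) ≤ j → F j = ⊤)
    (f : Module.End k V) (hf : f ∈ lowering F 1) :
    ∃ g : (r : ℤ) → (V ⧸ F r) →ₗ[k] ↥(F r),
      f = ∑ r ∈ Finset.Icc (1 : ℤ) ((N : ℤ) - 1),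
        (F r).subtype ∘ₗ (g r) ∘ₗ (F r).mkQ := by
  -- choose for each r a projection P r : V → V with range in F r, identity on F r
  have hproj : ∀ r : ℤ, ∃ P : V →ₗ[k] V, (∀ x, P x ∈ F r) ∧ (∀ x ∈ F r, P x = x) := by
    intro r
    obtain ⟨q, hq⟩ := Submodule.exists_isCompl (F r)
    refine ⟨(F r).subtype ∘ₗ Submodule.linearProjOfIsCompl (F r) q hq, fun x => ?_, fun x hx => ?_⟩
    · exact (Submodule.linearProjOfIsCompl (F r) q hq x).2
    · have : Submodule.linearProjOfIsCompl (F r) q hq x = ⟨x, hx⟩ := by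
        have := Submodule.linearProjOfIsCompl_apply_left hq ⟨x, hx⟩
        simpa [Submodule.linearProjOfIsCompl] using this
      simp [this]
  choose P hP1 hP2 using hproj
  -- the telescoping pieces
  set D : ℤ → Module.End k V := fun r => (P r - P (r - 1)) ∘ₗ f with hD
  have hDmem : ∀ r : ℤ, ∀ x : V, D r x ∈ F r := by
    intro r x
    have h1 : P r (f x) ∈ F r := hP1 r (f x)
    have h2 : P (r - 1) (f x) ∈ F r := hmono (by omega) (hP1 (r - 1) (f x))
    simpa [hD] using (F r).sub_mem h1 h2
  have hDker : ∀ r : ℤ, ∀ x ∈ F r, D r x = 0 := by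
    intro r x hx
    have hfx : f x ∈ F (r - 1) := hf r x hx
    have hfx' : f x ∈ F r := hmono (by omega) hfx
    simp [hD, hP2 r (f x) hfx', hP2 (r - 1) (f x) hfx]
  refine ⟨fun r => (F r).liftQ ((D r).codRestrict (F r) (hDmem r))
      (fun x hx => by simpa [LinearMap.mem_ker, Subtype.ext_iff] using hDker r x hx), ?_⟩
  ext x
  have key : ∀ r : ℤ,
      ((F r).subtype ∘ₗ ((F r).liftQ ((D r).codRestrict (F r) (hDmem r))
        (fun x hx => by simpa [LinearMap.mem_ker, Subtype.ext_iff] using hDker r x hx))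
        ∘ₗ (F r).mkQ) x = D r x := by
    intro r
    simp [Submodule.liftQ_apply]
  rw [LinearMap.sum_apply]
  simp only [key]
  have hcast : ((N : ℤ) - 1) = ((N - 1 : ℕ) : ℤ) := by omega
  have := telescope_aux (fun r : ℤ => P r (f x)) (N - 1)
  have hDx : ∀ r : ℤ, D r x = P r (f x) - P (r - 1) (f x) := by
    intro r; simp [hD]
  rw [hcast]
  simp only [hDx]
  rw [this]
  have hNx : P ((N - 1 : ℕ) : ℤ) (f x) = f x := by
    apply hP2
    have hx : x ∈ F N := by rw [hFN N le_rfl]; trivial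
    have := hf N x hx
    rwa [show (((N : ℕ) - 1 : ℕ) : ℤ) = (N : ℤ) - 1 by omega]
  have h0 : P 0 (f x) = 0 := by
    have := hP1 0 (f x)
    rwa [hF0 0 le_rfl, Submodule.mem_bot] at this
  rw [hNx, h0, sub_zero]
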